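/- For probability measures P, Q with χ²(P ‖ Q) finite and any positive integer k, the χ²-divergence of product measures satisfies χ²(P^{⊗k} ‖ Q^{⊗k}) = (1 + χ²(P ‖ Q))^k − 1. -/

import Mathlib

open MeasureTheory
open scoped ENNReal

private lemma lintegral_pi_prod' {α : Type*} [MeasurableSpace α] (Q : Measure α) [SigmaFinite Q] :
    ∀ (k : ℕ) (f : Fin k → α → ℝ≥0∞), (∀ i, Measurable (f i)) →
      ∫⁻ x : Fin k → α, ∏ i, f i (x i) ∂(Measure.pi fun _ => Q) = ∏ i, ∫⁻ x, f i x ∂Q := by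
  intro k
  induction k with
  | zero => intro f _; simp
  | succ n ih =>
    intro f hf
    have hmp := (measurePreserving_piFinSuccAbove (fun _ : Fin (n + 1) => Q) 0).symm
    have hmeas : Measurable fun x : Fin (n + 1) → α => ∏ i, f i (x i) :=
      Finset.measurable_prod _ fun i _ => (hf i).comp (measurable_pi_apply i)
    rw [← hmp.lintegral_comp hmeas]
    simp_rw [MeasurableEquiv.piFinSuccAbove_symm_apply, Fin.insertNthEquiv,
      Fin.prod_univ_succ, Fin.insertNth_zero]
    simp only [Equiv.coe_fn_mk, Fin.cons_zero, Fin.cons_succ, Fin.zero_succAbove]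
    calc ∫⁻ z : α × (Fin n → α), f 0 z.1 * ∏ i : Fin n, f i.succ (z.2 i)
          ∂(Q.prod (Measure.pi fun _ => Q))
        = (∫⁻ x, f 0 x ∂Q) * ∫⁻ y : Fin n → α, ∏ i : Fin n, f i.succ (y i)
            ∂(Measure.pi fun _ => Q) := by
          exact lintegral_prod_mul (hf 0).aemeasurable
            (Finset.measurable_prod _ fun (i : Fin n) _ =>
              (hf i.succ).comp (measurable_pi_apply i)).aemeasurable
      _ = (∫⁻ x, f 0 x ∂Q) * ∏ i : Fin n, ∫⁻ x, f i.succ x ∂Q := by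
          rw [ih (fun i : Fin n => f i.succ) fun i : Fin n => hf i.succ]

/-- Tensorization of the χ²-divergence: for probability measures `P ≪ Q` with
`χ²(P ‖ Q) = ∫ (dP/dQ)² dQ - 1` finite, and any positive integer `k`,
`χ²(P^⊗k ‖ Q^⊗k) = (1 + χ²(P ‖ Q))^k - 1`. -/
theorem chiSq_prod {α : Type*} [MeasurableSpace α]
    (P Q : Measure α) [IsProbabilityMeasure P] [IsProbabilityMeasure Q]
    (hPQ : P ≪ Q)
    (hint : Integrable (fun x => ((P.rnDeriv Q x).toReal) ^ 2) Q)
    (k : ℕ) (hk : 0 < k) :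
    (∫ y, (((Measure.pi (fun _ : Fin k => P)).rnDeriv
        (Measure.pi (fun _ : Fin k => Q)) y).toReal) ^ 2
        ∂(Measure.pi (fun _ : Fin k => Q))) - 1
      = (1 + ((∫ x, ((P.rnDeriv Q x).toReal) ^ 2 ∂Q) - 1)) ^ k - 1 := by
  set f := P.rnDeriv Q with hfdef
  have hfm : Measurable f := Measure.measurable_rnDeriv P Q
  have hgm : Measurable fun y : Fin k → α => ∏ i, f (y i) :=
    Finset.measurable_prod _ fun i _ => hfm.comp (measurable_pi_apply i)
  -- the product measure of P is the withDensity of the product measure of Q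
  have hpi : (Measure.pi fun _ : Fin k => Q).withDensity (fun y => ∏ i, f (y i))
      = Measure.pi (fun _ : Fin k => P) := by
    refine (Measure.pi_eq (μ := fun _ : Fin k => P) fun s hs => ?_).symm
    rw [withDensity_apply _ (MeasurableSet.univ_pi hs),
      ← lintegral_indicator (MeasurableSet.univ_pi hs)]
    have hind : ∀ y : Fin k → α,
        (Set.pi Set.univ s).indicator (fun y => ∏ i, f (y i)) y
          = ∏ i, (s i).indicator f (y i) := by
      intro y
      by_cases hy : y ∈ Set.pi Set.univ s
      · rw [Set.indicator_of_mem hy]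
        exact Finset.prod_congr rfl fun i _ =>
          (Set.indicator_of_mem (hy i (Set.mem_univ i)) f).symm
      · rw [Set.indicator_of_notMem hy]
        obtain ⟨i, hi⟩ : ∃ i, y i ∉ s i := by
          by_contra h
          push_neg at h
          exact hy fun i _ => h i
        exact (Finset.prod_eq_zero (Finset.mem_univ i)
          (Set.indicator_of_notMem hi f)).symm
    simp_rw [hind]
    rw [lintegral_pi_prod' Q k _ fun i => hfm.indicator (hs i)]
    refine Finset.prod_congr rfl fun i _ => ?_
    rw [lintegral_indicator (hs i), Measure.setLIntegral_rnDeriv hPQ]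
  -- identify the Radon-Nikodym derivative of the product measures
  have hae : (Measure.pi fun _ : Fin k => P).rnDeriv (Measure.pi fun _ : Fin k => Q)
      =ᵐ[Measure.pi fun _ : Fin k => Q] fun y => ∏ i, f (y i) := by
    rw [← hpi]
    exact Measure.rnDeriv_withDensity _ hgm
  have hInt : (∫ y, (((Measure.pi (fun _ : Fin k => P)).rnDeriv
      (Measure.pi (fun _ : Fin k => Q)) y).toReal) ^ 2
      ∂(Measure.pi (fun _ : Fin k => Q)))
      = (∫ x, ((f x).toReal) ^ 2 ∂Q) ^ k := by
    have h1 : (∫ y, (((Measure.pi (fun _ : Fin k => P)).rnDeriv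
        (Measure.pi (fun _ : Fin k => Q)) y).toReal) ^ 2
        ∂(Measure.pi (fun _ : Fin k => Q)))
        = ∫ y, ∏ i, ((f (y i)).toReal) ^ 2 ∂(Measure.pi (fun _ : Fin k => Q)) := by
      refine integral_congr_ae (hae.mono fun y hy => ?_)
      simp only [hy]
      rw [ENNReal.toReal_prod, ← Finset.prod_pow]
    rw [h1]
    letI : MeasureSpace α := ⟨Q⟩
    have hvol : (Measure.pi fun _ : Fin k => Q) = (volume : Measure (Fin k → α)) :=
      (volume_pi).symm
    rw [hvol]
    have := MeasureTheory.integral_fintype_prod_eq_pow (𝕜 := ℝ) (ι := Fin k) (μ := Q)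
      (fun x => ((f x).toReal) ^ 2)
    simpa [hvol] using this
  rw [hInt]
  ring_nf
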